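/- Let U = SC and U₀ = SC₀ be the evolution operators of the position-dependent and position-independent quantum walks on ℤ, respectively, where the coin family {C(x)} satisfies ‖C(x) − C₀‖ ≤ c₁|x|^{−1−ε} for all x ∈ ℤ∖{0} with constants c₁, ε > 0. Then U − U₀ is a trace class operator on ℓ²(ℤ; ℂ²). -/

import Mathlib

noncomputable section
open MeasureTheory Filter Topology Complex

/-- The Hilbert space `ℓ²(ℤ; ℂ²)` of the quantum walk. -/
abbrev QWH := lp (fun _ : ℤ => EuclideanSpace ℂ (Fin 2)) 2

/-- `U = SC` is the quantum-walk evolution with coin family `Ccoin`: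
`(UΨ)(x) = P(x+1)Ψ(x+1) + Q(x-1)Ψ(x-1)`, i.e. the upper component of `UΨ` at `x`
is the upper component of `C(x+1)Ψ(x+1)` and the lower one is the lower component
of `C(x-1)Ψ(x-1)`. -/
def IsQWEvolution (Ccoin : ℤ → Matrix (Fin 2) (Fin 2) ℂ) (U : QWH →L[ℂ] QWH) : Prop :=
  ∀ Ψ : QWH, ∀ x : ℤ,
    (U Ψ) x 0 = Matrix.mulVec (Ccoin (x + 1)) (Ψ (x + 1)) 0 ∧
    (U Ψ) x 1 = Matrix.mulVec (Ccoin (x - 1)) (Ψ (x - 1)) 1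

/-- A bounded operator on a Hilbert space is trace class iff it admits a nuclear
representation `T = ∑ₙ |aₙ⟩⟨bₙ|` with `∑ₙ ‖aₙ‖‖bₙ‖ < ∞` (in a Hilbert space this is
equivalent to `Tr |T| < ∞`). -/
def IsTraceClass {E : Type*} [NormedAddCommGroup E] [InnerProductSpace ℂ E]
    (T : E →L[ℂ] E) : Prop :=
  ∃ a b : ℕ → E, Summable (fun n => ‖a n‖ * ‖b n‖) ∧
    ∀ ψ, T ψ = ∑' n, (inner ℂ (b n) ψ : ℂ) • a n

/-- Assumption (A.1): `‖C(x) − C₀‖ ≤ c₁|x|^{−1−ε}` for `x ≠ 0`, where `‖·‖` is the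
operator norm of a `2×2` matrix acting on `ℂ²`. -/
def AssumpA1 (Ccoin : ℤ → Matrix (Fin 2) (Fin 2) ℂ) (C0 : Matrix (Fin 2) (Fin 2) ℂ) : Prop :=
  ∃ c₁ ε : ℝ, 0 < c₁ ∧ 0 < ε ∧ ∀ x : ℤ, x ≠ 0 →
    ‖Matrix.toEuclideanCLM (𝕜 := ℂ) (Ccoin x - C0)‖ ≤ c₁ * ((|x| : ℤ) : ℝ) ^ (-(1 + ε))

namespace QWAux

def sg : Fin 2 → ℤ := fun i => if i = 0 then 1 else -1

def ee (x : ℤ) (i : Fin 2) : QWH := lp.single 2 x (EuclideanSpace.single i (1:ℂ))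

lemma norm_ee (x : ℤ) (i : Fin 2) : ‖ee x i‖ = 1 := by
  have := lp.norm_single (p := 2) (E := fun _ : ℤ => EuclideanSpace ℂ (Fin 2))
    (by norm_num) x (EuclideanSpace.single i (1:ℂ))
  simpa [ee] using this

lemma inner_ee (x : ℤ) (i : Fin 2) (ψ : QWH) : (inner ℂ (ee x i) ψ : ℂ) = ψ x i := by
  rw [ee, lp.inner_single_left, EuclideanSpace.inner_single_left]
  simp

lemma ee_apply (x : ℤ) (i : Fin 2) (y : ℤ) (k : Fin 2) :
    (ee x i : QWH) y k = if y = x ∧ k = i then 1 else 0 := by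
  rcases eq_or_ne y x with rfl | hne
  · rw [ee, lp.single_apply_self, EuclideanSpace.single_apply]
    simp
  · rw [ee, lp.single_apply_ne _ _ _ hne]
    simp [hne]

lemma coord_norm_le (v : EuclideanSpace ℂ (Fin 2)) (i : Fin 2) : ‖v i‖ ≤ ‖v‖ := by
  have := norm_inner_le_norm (𝕜 := ℂ) (EuclideanSpace.single i (1:ℂ)) v
  simpa [EuclideanSpace.inner_single_left] using this

lemma entry_norm_le (M : Matrix (Fin 2) (Fin 2) ℂ) (i j : Fin 2) :
    ‖M i j‖ ≤ ‖Matrix.toEuclideanCLM (𝕜 := ℂ) M‖ := by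
  set T := Matrix.toEuclideanCLM (𝕜 := ℂ) M
  have happ : (T (EuclideanSpace.single j (1:ℂ))) i = M i j := by
    have h := Matrix.ofLp_toEuclideanCLM (𝕜 := ℂ) M (EuclideanSpace.single j (1:ℂ))
    have h2 := congrFun h i
    have h3 : (EuclideanSpace.single j (1:ℂ)).ofLp = Pi.single j 1 := by
      ext k
      simp [EuclideanSpace.single_apply, Pi.single_apply]
    rw [h3, Matrix.mulVec_single] at h2
    exact h2.trans (by simp)
  calc ‖M i j‖ = ‖(T (EuclideanSpace.single j (1:ℂ))) i‖ := by rw [happ]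
    _ ≤ ‖T (EuclideanSpace.single j (1:ℂ))‖ := coord_norm_le _ i
    _ ≤ ‖T‖ * ‖EuclideanSpace.single j (1:ℂ)‖ := T.le_opNorm _
    _ ≤ ‖T‖ := by simp

end QWAux

namespace QWAux

lemma smul_apply' (c : ℂ) (f : QWH) (y : ℤ) (k : Fin 2) : (c • f) y k = c * f y k := by
  rw [lp.coeFn_smul]
  rfl

lemma sub_apply' (f g : QWH) (y : ℤ) (k : Fin 2) : (f - g) y k = f y k - g y k := by
  rw [lp.coeFn_sub]
  rfl

end QWAux


set_option maxHeartbeats 1000000 in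
/-- Lemma 2.1: under assumption (A.1), the difference `U − U₀` of the
position-dependent and position-independent quantum walk evolutions is trace class. -/
theorem qw_diff_isTraceClass
    (Ccoin : ℤ → Matrix (Fin 2) (Fin 2) ℂ) (C0 : Matrix (Fin 2) (Fin 2) ℂ)
    (hcoin : ∀ x : ℤ, Ccoin x ∈ Matrix.unitaryGroup (Fin 2) ℂ)
    (hC0 : C0 ∈ Matrix.unitaryGroup (Fin 2) ℂ)
    (hA1 : AssumpA1 Ccoin C0)
    (U U0 : unitary (QWH →L[ℂ] QWH))
    (hU : IsQWEvolution Ccoin (U : QWH →L[ℂ] QWH))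
    (hU0 : IsQWEvolution (fun _ => C0) (U0 : QWH →L[ℂ] QWH)) :
    IsTraceClass ((U : QWH →L[ℂ] QWH) - (U0 : QWH →L[ℂ] QWH)) := by
  classical
  obtain ⟨c₁, ε, hc₁, hε, hbound⟩ := hA1
  set Δ : ℤ → Matrix (Fin 2) (Fin 2) ℂ := fun y => Ccoin y - C0 with hΔ
  set D : QWH →L[ℂ] QWH := (U : QWH →L[ℂ] QWH) - (U0 : QWH →L[ℂ] QWH) with hDdef
  -- coordinate formula for D
  have hDcoord : ∀ (ψ : QWH) (y : ℤ) (k : Fin 2),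
      (D ψ) y k = (Δ (y + QWAux.sg k)).mulVec (ψ (y + QWAux.sg k)) k := by
    intro ψ y k
    have hsub : (D ψ) y k
        = ((U : QWH →L[ℂ] QWH) ψ) y k - ((U0 : QWH →L[ℂ] QWH) ψ) y k := by
      rw [hDdef, ContinuousLinearMap.sub_apply, QWAux.sub_apply']
    rcases (by omega : k = 0 ∨ k = 1) with rfl | rfl
    · rw [hsub, (hU ψ y).1, (hU0 ψ y).1]
      have : y + QWAux.sg 0 = y + 1 := rfl
      rw [this, hΔ, Matrix.sub_mulVec]
      rfl
    · rw [hsub, (hU ψ y).2, (hU0 ψ y).2]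
      have h1 : y + QWAux.sg 1 = y - 1 := by
        simp [QWAux.sg, sub_eq_add_neg]
      rw [h1, hΔ, Matrix.sub_mulVec]
      rfl
  -- nuclear family indexed by ℤ × Fin 2 × Fin 2
  obtain ⟨eqv⟩ : Nonempty ((ℤ × Fin 2 × Fin 2) ≃ ℕ) := by
    letI : Denumerable (ℤ × Fin 2 × Fin 2) := Denumerable.ofEncodableOfInfinite _
    exact ⟨Denumerable.eqv (ℤ × Fin 2 × Fin 2)⟩
  set A : ℤ × Fin 2 × Fin 2 → QWH :=
    fun p => (Δ (p.1 + QWAux.sg p.2.1) p.2.1 p.2.2) • QWAux.ee p.1 p.2.1 with hA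
  set B : ℤ × Fin 2 × Fin 2 → QWH :=
    fun p => QWAux.ee (p.1 + QWAux.sg p.2.1) p.2.2 with hB
  -- summability of the coefficients
  have hbase : Summable (fun y : ℤ => ‖Matrix.toEuclideanCLM (𝕜 := ℂ) (Δ y)‖) := by
    apply Summable.of_norm_bounded_eventually (g := fun y : ℤ => c₁ * |(y : ℝ)| ^ (-(1 + ε)))
    · exact (Real.summable_abs_int_rpow (by linarith)).mul_left c₁
    · rw [Filter.eventually_cofinite]
      apply Set.Finite.subset (Set.finite_singleton (0 : ℤ))
      intro y hy
      by_contra h0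
      apply hy
      have hb := hbound y h0
      rw [Real.norm_eq_abs, _root_.abs_of_nonneg (norm_nonneg _)]
      have hcast : ((|y| : ℤ) : ℝ) = |(y : ℝ)| := by push_cast; ring
      rw [hcast] at hb
      exact hb
  have hShift : Summable (fun p : ℤ × Fin 2 × Fin 2 =>
      ‖Matrix.toEuclideanCLM (𝕜 := ℂ) (Δ (p.1 + QWAux.sg p.2.1))‖) := by
    rw [← Equiv.summable_iff (Equiv.prodComm (Fin 2 × Fin 2) ℤ)]
    apply (summable_prod_of_nonneg (fun _ => norm_nonneg _)).2
    refine ⟨fun ij => ?_, Summable.of_finite⟩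
    exact hbase.comp_injective (add_left_injective (QWAux.sg ij.1))
  have hS : Summable (fun p : ℤ × Fin 2 × Fin 2 => ‖A p‖ * ‖B p‖) := by
    have hnormAB : ∀ p : ℤ × Fin 2 × Fin 2,
        ‖A p‖ * ‖B p‖ = ‖Δ (p.1 + QWAux.sg p.2.1) p.2.1 p.2.2‖ := by
      intro p
      rw [hA, hB, norm_smul, QWAux.norm_ee, QWAux.norm_ee]
      simp
    apply Summable.of_nonneg_of_le
      (fun p => mul_nonneg (norm_nonneg _) (norm_nonneg _)) _ hShift
    intro p
    rw [hnormAB p]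
    exact QWAux.entry_norm_le _ _ _
  refine ⟨fun n => A (eqv.symm n), fun n => B (eqv.symm n), ?_, ?_⟩
  · exact hS.comp_injective eqv.symm.injective
  · intro ψ
    set F : ℤ × Fin 2 × Fin 2 → QWH := fun p => (inner ℂ (B p) ψ : ℂ) • A p with hF
    have hFsummable : Summable F := by
      apply Summable.of_norm
      apply Summable.of_nonneg_of_le (fun _ => norm_nonneg _) _ (hS.mul_right ‖ψ‖)
      intro p
      rw [hF]
      calc ‖(inner ℂ (B p) ψ : ℂ) • A p‖ = ‖(inner ℂ (B p) ψ : ℂ)‖ * ‖A p‖ := norm_smul _ _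
        _ ≤ (‖B p‖ * ‖ψ‖) * ‖A p‖ := by
            apply mul_le_mul_of_nonneg_right (norm_inner_le_norm _ _) (norm_nonneg _)
        _ = ‖A p‖ * ‖B p‖ * ‖ψ‖ := by ring
    have key : D ψ = ∑' p, F p := by
      refine lp.ext (funext fun y => PiLp.ext fun k => ?_)
      have hcoord : ∀ f : QWH, (innerSL ℂ (QWAux.ee y k)) f = f y k := fun f =>
        QWAux.inner_ee y k f
      have h1 : (∑' p, F p) y k = ∑' p, (F p : QWH) y k := by
        rw [← hcoord, ContinuousLinearMap.map_tsum _ hFsummable]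
        exact tsum_congr fun p => hcoord (F p)
      show (D ψ) y k = (∑' p, F p) y k
      rw [h1, tsum_eq_sum (s := ({(y, (k, 0)), (y, (k, 1))} : Finset (ℤ × Fin 2 × Fin 2)))
        ?hzero]
      case hzero =>
        intro p hp
        rcases p with ⟨x, i, j⟩
        by_cases hx : y = x ∧ k = i
        · exfalso
          obtain ⟨rfl, rfl⟩ := hx
          apply hp
          rcases (by omega : j = 0 ∨ j = 1) with rfl | rfl <;> simp
        · rw [hF]
          simp only [QWAux.smul_apply', hA, QWAux.ee_apply, if_neg hx, mul_zero]
      · rw [Finset.sum_pair (by simp)]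
        rw [hDcoord]
        rw [hF]
        simp only [QWAux.smul_apply', hA, hB, QWAux.inner_ee, QWAux.ee_apply,
          Matrix.mulVec, dotProduct, Fin.sum_univ_two]
        simp
        ring
    calc D ψ = ∑' p, F p := key
      _ = ∑' n, F (eqv.symm n) := (Equiv.tsum_eq eqv.symm F).symm
      _ = ∑' n, (inner ℂ (B (eqv.symm n)) ψ : ℂ) • A (eqv.symm n) := rfl
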